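/- Let (X,T) be a dynamical system admitting a regular periodic decomposition D = {D_0, …, D_{r−1}} such that for every i the restriction of T^r to D_i has the weak specification property (or, alternatively, such that for every i the restriction of T^r to D_i has the approximate product structure obtained from almost specification — more generally, any property implying the approximate product structure of T^r on each D_i). Then (X,T) has the approximate product property. In particular, if each T^r|_{D_i} has the weak specification property, then (X,T) has the approximate product property. -/

import Mathlib

/-- The shadowing property: every δ-pseudo-orbit is ε-traced by a true orbit. -/
def ShadowingProp {X : Type*} [MetricSpace X] (T : X → X) : Prop :=
  ∀ ε : ℝ, 0 < ε → ∃ δ : ℝ, 0 < δ ∧ ∀ x : ℕ → X,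
    (∀ n, dist (T (x n)) (x (n + 1)) < δ) →
    ∃ y : X, ∀ n, dist (x n) (T^[n] y) < ε

/-- Topological transitivity. -/
def TopTransitive {X : Type*} [MetricSpace X] (T : X → X) : Prop :=
  ∀ U V : Set X, IsOpen U → IsOpen V → U.Nonempty → V.Nonempty →
    ∃ n : ℕ, 0 < n ∧ (U ∩ T^[n] ⁻¹' V).Nonempty

/-- The approximate product property for `T`, relative to a (T-invariant) subset `D`:
for all ε, δ₁, δ₂ > 0 there is N such that for every n ≥ N and every sequence of points
of `D` there are gaps `h` with `h 0 = 0`, `n ≤ h (i+1) - h i ≤ n (1 + δ₂)`, and a point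
`y ∈ D` whose orbit ε-traces each orbit segment up to at most `δ₁ n` mistakes.
Taking `D = Set.univ` gives the usual approximate product property. -/
def ApproxProductOn {X : Type*} [MetricSpace X] (T : X → X) (D : Set X) : Prop :=
  ∀ ε : ℝ, 0 < ε → ∀ δ₁ : ℝ, 0 < δ₁ → ∀ δ₂ : ℝ, 0 < δ₂ →
    ∃ N : ℕ, 0 < N ∧ ∀ n : ℕ, N ≤ n → ∀ x : ℕ → X, (∀ i, x i ∈ D) →
      ∃ h : ℕ → ℕ, h 0 = 0 ∧
        (∀ i, h i + n ≤ h (i + 1) ∧ ((h (i + 1) : ℝ) - (h i : ℝ) ≤ n * (1 + δ₂))) ∧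
        ∃ y ∈ D, ∀ i,
          (((Finset.range n).filter
              (fun j => ε < dist (T^[h i + j] y) (T^[j] (x i)))).card : ℝ) ≤ δ₁ * n

/-- A regular periodic decomposition `D 0, …, D (r-1)` of `(X,T)`. -/
def RegPerDecomp {X : Type*} [MetricSpace X] (T : X → X) (r : ℕ) (D : ℕ → Set X) : Prop :=
  0 < r ∧
  (∀ i < r, D i = closure (interior (D i))) ∧
  (∀ i < r, ∀ j < r, i ≠ j → IsNowhereDense (D i ∩ D j)) ∧
  (∀ i < r, T '' D i ⊆ D ((i + 1) % r)) ∧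
  (⋃ i ∈ Finset.range r, D i) = Set.univ

/-- The weak specification property for `T` relative to a (T-invariant) subset `D`:
specifications consisting of points of `D`, with gaps at least `M ε` of the length of the
following segment (`M ε` nondecreasing and sublinear), are ε-traced by points of `D`. -/
def WeakSpecOn {X : Type*} [MetricSpace X] (T : X → X) (D : Set X) : Prop :=
  ∀ ε : ℝ, 0 < ε → ∃ M : ℕ → ℕ, Monotone M ∧
    Filter.Tendsto (fun n : ℕ => (M n : ℝ) / n) Filter.atTop (nhds 0) ∧
    ∀ (n : ℕ) (a b : ℕ → ℕ) (x : ℕ → X),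
      (∀ j < n, x j ∈ D) → (∀ j < n, a j ≤ b j) →
      (∀ j, j + 1 < n →
        b j < a (j + 1) ∧ b j + M (b (j + 1) - a (j + 1) + 1) ≤ a (j + 1)) →
      ∃ y ∈ D, ∀ j < n, ∀ k, a j ≤ k → k ≤ b j →
        dist (T^[k] y) (T^[k] (x j)) ≤ ε

open Filter Metric

section Helpers
variable {X : Type*} [MetricSpace X] [CompactSpace X]

lemma iter_horizon (S : X → X) (hS : Continuous S) {ε : ℝ} (hε : 0 < ε) (L : ℕ) :
    ∃ δ : ℝ, 0 < δ ∧ ∀ a b : X, dist a b ≤ δ → ∀ q ≤ L, dist (S^[q] a) (S^[q] b) ≤ ε := by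
  induction L with
  | zero =>
    refine ⟨ε, hε, fun a b hab q hq => ?_⟩
    interval_cases q
    simpa using hab
  | succ L ih =>
    obtain ⟨δL, hδL, hL⟩ := ih
    obtain ⟨δ', hδ', hS'⟩ := Metric.uniformContinuous_iff.mp
      (CompactSpace.uniformContinuous_of_continuous hS) δL hδL
    refine ⟨min (δ'/2) ε, by positivity, fun a b hab q hq => ?_⟩
    match q with
    | 0 => simpa using hab.trans (min_le_right _ _)
    | (q+1) =>
      rw [Function.iterate_succ_apply, Function.iterate_succ_apply]
      refine hL (S a) (S b) ?_ q (by omega)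
      have h1 : dist a b < δ' := lt_of_le_of_lt (hab.trans (min_le_left _ _)) (by linarith)
      exact (hS' h1).le

variable {S : X → X} {E : Set X}

lemma iter_image_subset (hSE : S '' E ⊆ E) : ∀ t, S^[t] '' E ⊆ E := by
  intro t
  induction t with
  | zero => simp
  | succ t ih =>
    calc S^[t+1] '' E = S^[t] '' (S '' E) := by
          rw [Function.iterate_succ, Set.image_comp]
      _ ⊆ S^[t] '' E := Set.image_mono hSE
      _ ⊆ E := ih

lemma K_antitone (hSE : S '' E ⊆ E) :
    Antitone (fun t : ℕ => closure (S^[t] '' E)) := by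
  apply antitone_nat_of_succ_le
  intro t
  apply closure_mono
  rw [Function.iterate_succ, Set.image_comp]
  exact Set.image_mono hSE

lemma K_img (hS : Continuous S) (s d : ℕ) :
    closure (S^[d + s] '' E) ⊆ S^[d] '' closure (S^[s] '' E) := by
  apply closure_minimal
  · rw [Function.iterate_add, Set.image_comp]
    exact Set.image_mono subset_closure
  · exact ((isClosed_closure.isCompact).image (hS.iterate d)).isClosed

lemma Kinf_surj (hS : Continuous S) (hSE : S '' E ⊆ E)
    {v : X} (hv : v ∈ ⋂ t : ℕ, closure (S^[t] '' E)) (d : ℕ) :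
    ∃ w ∈ ⋂ t : ℕ, closure (S^[t] '' E), S^[d] w = v := by
  have hKmono := K_antitone (E := E) hSE
  set C : ℕ → Set X := fun s => closure (S^[s] '' E) ∩ S^[d] ⁻¹' {v} with hC
  have hne : ∀ s, (C s).Nonempty := by
    intro s
    have hv' : v ∈ closure (S^[d + s] '' E) := Set.mem_iInter.mp hv (d + s)
    obtain ⟨u, hu, hud⟩ := K_img hS s d hv'
    exact ⟨u, hu, by simpa using hud⟩
  have hcl : ∀ s, IsClosed (C s) :=
    fun s => isClosed_closure.inter (isClosed_singleton.preimage (hS.iterate d))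
  have hcpt : ∀ s, IsCompact (C s) := fun s => (hcl s).isCompact
  have hdir : Directed (· ⊇ ·) C := by
    intro a b
    exact ⟨max a b,
      Set.inter_subset_inter_left _ (hKmono (le_max_left a b)),
      Set.inter_subset_inter_left _ (hKmono (le_max_right a b))⟩
  obtain ⟨w, hw⟩ := IsCompact.nonempty_iInter_of_directed_nonempty_isCompact_isClosed C hdir hne hcpt hcl
  refine ⟨w, Set.mem_iInter.mpr (fun t => (Set.mem_iInter.mp hw t).1), ?_⟩
  have := (Set.mem_iInter.mp hw 0).2
  simpa using this

lemma K_collapse (hSE : S '' E ⊆ E) {δ : ℝ} (hδ : 0 < δ) :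
    ∃ J : ℕ, closure (S^[J] '' E) ⊆
      Metric.thickening δ (⋂ t : ℕ, closure (S^[t] '' E)) := by
  by_contra hcon
  push_neg at hcon
  have hKmono := K_antitone (E := E) hSE
  set Kinf := ⋂ t : ℕ, closure (S^[t] '' E) with hKinf
  set C : ℕ → Set X := fun s => closure (S^[s] '' E) ∩ (Metric.thickening δ Kinf)ᶜ with hC
  have hne : ∀ s, (C s).Nonempty := by
    intro s
    obtain ⟨z, hz1, hz2⟩ := Set.not_subset.mp (hcon s)
    exact ⟨z, hz1, hz2⟩
  have hcl : ∀ s, IsClosed (C s) :=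
    fun s => isClosed_closure.inter (Metric.isOpen_thickening.isClosed_compl)
  have hcpt : ∀ s, IsCompact (C s) := fun s => (hcl s).isCompact
  have hdir : Directed (· ⊇ ·) C := by
    intro a b
    exact ⟨max a b,
      Set.inter_subset_inter_left _ (hKmono (le_max_left a b)),
      Set.inter_subset_inter_left _ (hKmono (le_max_right a b))⟩
  obtain ⟨z, hz⟩ := IsCompact.nonempty_iInter_of_directed_nonempty_isCompact_isClosed C hdir hne hcpt hcl
  have hzK : z ∈ Kinf := Set.mem_iInter.mpr (fun t => (Set.mem_iInter.mp hz t).1)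
  exact (Set.mem_iInter.mp hz 0).2 (Metric.self_subset_thickening hδ _ hzK)

end Helpers

section Main
variable {X : Type*} [MetricSpace X] [CompactSpace X]

lemma weakSpecOn_implies_approxProductOn (S : X → X) (hS : Continuous S)
    (E : Set X) (hE : IsClosed E) (hSE : S '' E ⊆ E) (hws : WeakSpecOn S E) :
    ApproxProductOn S E := by
  intro ε hε δ₁ hδ₁ δ₂ hδ₂
  obtain ⟨M, hMmono, hMlim, hMspec⟩ := hws (ε/2) (by positivity)
  -- choose block length m
  have hδ₁8 : (0:ℝ) < δ₁/8 := by positivity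
  have hev : ∀ᶠ k : ℕ in atTop, (M k : ℝ)/k < δ₁/8 := hMlim.eventually (gt_mem_nhds hδ₁8)
  obtain ⟨m₁, hm₁⟩ := eventually_atTop.mp hev
  set m : ℕ := max m₁ (max 1 ⌈(8:ℝ)/δ₁⌉₊) with hm_def
  have hm1 : 1 ≤ m := le_trans (le_max_left _ _) (le_max_right _ _)
  have hmpos : (0:ℝ) < m := by exact_mod_cast hm1
  have hmM : (M m + 1 : ℝ) ≤ δ₁/4 * m := by
    have h1 : (M m : ℝ)/m < δ₁/8 := hm₁ m (le_max_left _ _)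
    have h2 : (M m : ℝ) < δ₁/8 * m := by
      rw [div_lt_iff₀ hmpos] at h1; linarith
    have h3 : (8:ℝ)/δ₁ ≤ m := by
      have := Nat.le_ceil ((8:ℝ)/δ₁)
      have h4 : (⌈(8:ℝ)/δ₁⌉₊ : ℝ) ≤ m := by
        exact_mod_cast le_trans (le_max_right _ _) (le_max_right m₁ _)
      linarith
    have h5 : (1:ℝ) ≤ δ₁/8 * m := by
      have : δ₁/8 * ((8:ℝ)/δ₁) = 1 := by field_simp
      nlinarith
    linarith

  set p : ℕ := m + M m + 1 with hp_def
  have hppos : 0 < p := by omega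
  -- horizon
  obtain ⟨δ, hδpos, hδcont⟩ := iter_horizon S hS (show (0:ℝ) < ε/2 by positivity) m
  -- collapse
  obtain ⟨J₀, hJ₀⟩ := K_collapse (E := E) hSE hδpos
  set J : ℕ := max J₀ (M m) with hJ_def
  -- choose N
  obtain ⟨N₁, hN₁⟩ := exists_nat_ge ((2/δ₁) * (J + p))
  refine ⟨max (J + p) N₁ + 1, by omega, ?_⟩
  intro n hn x hx
  have hnJp : J + p ≤ n := by omega
  have hnN₁ : (N₁ : ℝ) ≤ n := by exact_mod_cast (by omega : N₁ ≤ n)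
  have hnR : (J : ℝ) + p ≤ δ₁/2 * n := by
    have h1 : (2/δ₁) * ((J:ℝ) + p) ≤ n := le_trans hN₁ hnN₁
    have h2 : δ₁/2 * ((2/δ₁) * ((J:ℝ) + p)) = (J:ℝ) + p := by
      field_simp
    nlinarith
  set L : ℕ := (n - J) / p with hL_def
  have hLp : L * p ≤ n - J := Nat.div_mul_le_self _ _
  have hLpmod := Nat.div_add_mod (n - J) p    -- p * ((n-J)/p) + (n-J) % p = n - J
  have hmodlt : (n - J) % p < p := Nat.mod_lt _ hppos
  have hL1 : 1 ≤ L := by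
    rw [hL_def]
    rw [Nat.one_le_div_iff hppos]
    omega
  -- choices of v and w
  have hvex : ∀ i l : ℕ, ∃ v ∈ (⋂ t : ℕ, closure (S^[t] '' E)), dist (S^[J + l*p] (x i)) v < δ := by
    intro i l
    have h1 : S^[J + l*p] (x i) ∈ closure (S^[J + l*p] '' E) :=
      subset_closure ⟨x i, hx i, rfl⟩
    have h2 : closure (S^[J + l*p] '' E) ⊆ closure (S^[J₀] '' E) :=
      K_antitone (E := E) hSE (by omega)
    exact Metric.mem_thickening_iff.mp (hJ₀ (h2 h1))
  choose v hvK hvd using hvex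
  have hwex : ∀ i l : ℕ, ∃ w ∈ (⋂ t : ℕ, closure (S^[t] '' E)), S^[i*n + (J + l*p)] w = v i l :=
    fun i l => Kinf_surj hS hSE (hvK i l) _
  choose w hwK hwd using hwex
  have hKinfE : (⋂ t : ℕ, closure (S^[t] '' E)) ⊆ E := by
    refine (Set.iInter_subset _ 0).trans ?_
    simpa using closure_minimal (by simp : S^[0] '' E ⊆ E) hE
  -- per-P tracing points
  have hL0 : 0 < L := hL1
  have hyex : ∀ P : ℕ, ∃ y ∈ E, ∀ i < P, ∀ l < L, ∀ q < m,
      dist (S^[i*n + (J + l*p) + q] y) (S^[(J + l*p) + q] (x i)) ≤ ε := by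
    intro P
    have hMarg : ∀ A : ℕ, A + (m-1) - A + 1 = m := fun A => by omega
    have hgaps : ∀ jdx : ℕ, jdx + 1 < P*L →
        (jdx / L)*n + (J + (jdx % L)*p) + (m - 1) < ((jdx+1) / L)*n + (J + ((jdx+1) % L)*p) ∧
        (jdx / L)*n + (J + (jdx % L)*p) + (m - 1) +
          M (((jdx+1) / L)*n + (J + ((jdx+1) % L)*p) + (m - 1)
              - (((jdx+1) / L)*n + (J + ((jdx+1) % L)*p)) + 1) ≤
          ((jdx+1) / L)*n + (J + ((jdx+1) % L)*p) := by
      intro jdx _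
      rw [hMarg]
      have hlm := Nat.mod_lt jdx hL0
      have hdm := Nat.div_add_mod jdx L
      set i := jdx / L with hi_def
      set l := jdx % L with hl_def
      by_cases hcase : l + 1 < L
      · have e : jdx + 1 = (l+1) + L*i := by omega
        rw [e, Nat.add_mul_div_left _ _ hL0, Nat.div_eq_of_lt hcase, Nat.zero_add,
          Nat.add_mul_mod_self_left, Nat.mod_eq_of_lt hcase]
        have e2 : (l+1)*p = l*p + p := by ring
        rw [e2]
        refine ⟨by omega, by omega⟩
      · have hlL : l + 1 = L := by omega
        have e2 : L*(i+1) = L*i + L := by ring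
        have e : jdx + 1 = L*(i+1) := by omega
        rw [e, Nat.mul_div_cancel_left _ hL0, Nat.mul_mod_right]
        have e3 : (i+1)*n = i*n + n := by ring
        have e4 : l*p + p = L*p := by rw [← hlL]; ring
        refine ⟨by omega, by omega⟩
    obtain ⟨y, hyE, hytr⟩ := hMspec (P*L)
      (fun jdx => (jdx / L)*n + (J + (jdx % L)*p))
      (fun jdx => (jdx / L)*n + (J + (jdx % L)*p) + (m - 1))
      (fun jdx => w (jdx / L) (jdx % L))
      (fun jdx _ => hKinfE (hwK _ _))
      (fun jdx _ => Nat.le_add_right _ _)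
      hgaps
    refine ⟨y, hyE, ?_⟩
    intro i hi l hl q hq
    have hjdx : i*L + l < P*L := by
      have h1 : (i+1)*L = i*L + L := by ring
      have h2 : (i+1)*L ≤ P*L := Nat.mul_le_mul_right _ hi
      omega
    have hdiv : (i*L + l) / L = i := by
      rw [add_comm, mul_comm, Nat.add_mul_div_left _ _ hL0, Nat.div_eq_of_lt hl, Nat.zero_add]
    have hmod : (i*L + l) % L = l := by
      rw [add_comm, mul_comm, Nat.add_mul_mod_self_left, Nat.mod_eq_of_lt hl]
    have htr := hytr (i*L + l) hjdx
    simp only [hdiv, hmod] at htr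
    have h1 := htr (i*n + (J + l*p) + q) (by omega) (by omega)
    have e1 : S^[i*n + (J + l*p) + q] (w i l) = S^[q] (v i l) := by
      rw [add_comm (i*n + (J + l*p)) q, Function.iterate_add_apply, hwd]
    rw [e1] at h1
    have h2 : dist (S^[q] (v i l)) (S^[(J + l*p) + q] (x i)) ≤ ε/2 := by
      have e2 : S^[(J + l*p) + q] (x i) = S^[q] (S^[J + l*p] (x i)) := by
        rw [add_comm, Function.iterate_add_apply]
      rw [e2]
      exact hδcont (v i l) (S^[J + l*p] (x i)) (by rw [dist_comm]; exact (hvd i l).le) q hq.le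
    calc dist (S^[i*n + (J + l*p) + q] y) (S^[(J + l*p) + q] (x i))
        ≤ dist (S^[i*n + (J + l*p) + q] y) (S^[q] (v i l))
            + dist (S^[q] (v i l)) (S^[(J + l*p) + q] (x i)) := dist_triangle _ _ _
      _ ≤ ε/2 + ε/2 := add_le_add h1 h2
      _ = ε := by ring
  choose yseq hyseqE hytr using hyex
  obtain ⟨ylim, hylimE, φ, hφmono, hφtend⟩ := hE.isCompact.tendsto_subseq hyseqE
  refine ⟨fun i => i*n, by simp, ?_, ⟨ylim, hylimE, ?_⟩⟩
  · intro i
    constructor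
    · show i*n + n ≤ (i+1)*n
      have e : (i+1)*n = i*n + n := by ring
      omega
    · show ((i+1)*n : ℕ) - ((i*n : ℕ) : ℝ) ≤ n * (1 + δ₂)
      push_cast
      nlinarith [mul_nonneg (Nat.cast_nonneg (α := ℝ) n) hδ₂.le]
  · intro i
    set G : Finset ℕ := (Finset.range L).biUnion
      (fun l => Finset.Ico (J + l*p) (J + l*p + m)) with hG_def
    have hGsub : G ⊆ Finset.range n := by
      intro j hj
      obtain ⟨l, hl, hj2⟩ := Finset.mem_biUnion.mp hj
      rw [Finset.mem_range] at hl
      rw [Finset.mem_Ico] at hj2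
      rw [Finset.mem_range]
      have h1 : (l+1) * p ≤ L * p := Nat.mul_le_mul_right _ (by omega)
      have h2 : (l+1)*p = l*p + p := by ring
      omega
    have hdisj : ∀ a ∈ Finset.range L, ∀ b ∈ Finset.range L, a ≠ b →
        Disjoint (Finset.Ico (J + a*p) (J + a*p + m)) (Finset.Ico (J + b*p) (J + b*p + m)) := by
      intro a _ b _ hab
      rw [Finset.disjoint_left]
      intro j hja hjb
      rw [Finset.mem_Ico] at hja hjb
      rcases lt_or_gt_of_ne hab with hc | hc
      · have h1 : (a+1)*p ≤ b*p := Nat.mul_le_mul_right _ (by omega)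
        have h2 : (a+1)*p = a*p + p := by ring
        omega
      · have h1 : (b+1)*p ≤ a*p := Nat.mul_le_mul_right _ (by omega)
        have h2 : (b+1)*p = b*p + p := by ring
        omega
    have hGcard : G.card = L * m := by
      rw [hG_def, Finset.card_biUnion hdisj]
      have hcc : ∀ l ∈ Finset.range L, (Finset.Ico (J + l*p) (J + l*p + m)).card = m := by
        intro l _
        rw [Nat.card_Ico]
        omega
      rw [Finset.sum_congr rfl hcc, Finset.sum_const, Finset.card_range, smul_eq_mul]
    have htrace : ∀ j ∈ G, dist (S^[i*n + j] ylim) (S^[j] (x i)) ≤ ε := by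
      intro j hj
      obtain ⟨l, hl, hj2⟩ := Finset.mem_biUnion.mp hj
      rw [Finset.mem_range] at hl
      rw [Finset.mem_Ico] at hj2
      obtain ⟨q, hq, rfl⟩ : ∃ q, q < m ∧ j = (J + l*p) + q :=
        ⟨j - (J + l*p), by omega, by omega⟩
      have hc : Tendsto (fun P => S^[i*n + ((J + l*p) + q)] (yseq (φ P))) atTop
          (nhds (S^[i*n + ((J + l*p) + q)] ylim)) :=
        ((hS.iterate _).tendsto ylim).comp hφtend
      have htd := hc.dist (tendsto_const_nhds (x := S^[(J + l*p) + q] (x i)))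
      refine le_of_tendsto htd ?_
      filter_upwards [eventually_ge_atTop (i+1)] with P hP
      have hiP : i < φ P := lt_of_lt_of_le (by omega) hφmono.le_apply
      have h := hytr (φ P) i hiP l hl q hq
      rw [Nat.add_assoc] at h
      exact h
    have hmsub : (Finset.range n).filter
        (fun j => ε < dist (S^[i*n + j] ylim) (S^[j] (x i))) ⊆ Finset.range n \ G := by
      intro j hj
      rw [Finset.mem_filter] at hj
      rw [Finset.mem_sdiff]
      exact ⟨hj.1, fun hjG => absurd hj.2 (not_lt.mpr (htrace j hjG))⟩
    have hcard1 : ((Finset.range n).filter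
        (fun j => ε < dist (S^[i*n + j] ylim) (S^[j] (x i)))).card ≤ n - L*m := by
      calc ((Finset.range n).filter
          (fun j => ε < dist (S^[i*n + j] ylim) (S^[j] (x i)))).card
          ≤ (Finset.range n \ G).card := Finset.card_le_card hmsub
        _ = n - G.card := by rw [Finset.card_sdiff_of_subset hGsub, Finset.card_range]
        _ = n - L*m := by rw [hGcard]
    have hLm_n : L * m ≤ n := by
      have h1 : L * m ≤ L * p := Nat.mul_le_mul_left _ (by omega)
      omega
    have hcast : ((n - L*m : ℕ) : ℝ) = (n:ℝ) - (L:ℝ)*(m:ℝ) := by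
      rw [Nat.cast_sub hLm_n]
      push_cast
      ring
    have hnup : (n:ℝ) ≤ (J:ℝ) + (L:ℝ)*(p:ℝ) + p := by
      have e5 : p * L = p * ((n-J)/p) := by rw [hL_def]
      have e6 : L * p = p * L := Nat.mul_comm _ _
      have h1 : n ≤ J + L*p + p := by omega
      exact_mod_cast h1
    have hLMp : (L:ℝ)*(p:ℝ) = (L:ℝ)*m + (L:ℝ)*((M m:ℝ)+1) := by
      rw [hp_def]
      push_cast
      ring
    have hLM : (L:ℝ)*((M m:ℝ)+1) ≤ δ₁/4 * ((L:ℝ)*(m:ℝ)) := by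
      have h1 := mul_le_mul_of_nonneg_left hmM (show (0:ℝ) ≤ L by positivity)
      nlinarith [h1]
    have hLmn : (L:ℝ)*(m:ℝ) ≤ n := by exact_mod_cast hLm_n
    have h9 : δ₁/4 * ((L:ℝ)*(m:ℝ)) ≤ δ₁/4 * n :=
      mul_le_mul_of_nonneg_left hLmn (by positivity)
    have hfinal : (((Finset.range n).filter
        (fun j => ε < dist (S^[i*n + j] ylim) (S^[j] (x i)))).card : ℝ) ≤ δ₁ * n := by
      have hc1 : (((Finset.range n).filter
          (fun j => ε < dist (S^[i*n + j] ylim) (S^[j] (x i)))).card : ℝ)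
          ≤ ((n - L*m : ℕ) : ℝ) := by exact_mod_cast hcard1
      rw [hcast] at hc1
      linarith
    exact hfinal


end Main


lemma regPerDecomp_iter_image {X : Type*} [MetricSpace X] (T : X → X) {r : ℕ}
    {D : ℕ → Set X} (hr : 0 < r) (hmap : ∀ i < r, T '' D i ⊆ D ((i + 1) % r)) :
    ∀ v : ℕ, ∀ i < r, T^[v] '' D i ⊆ D ((i + v) % r) := by
  intro v
  induction v with
  | zero =>
    intro i hi
    simp [Nat.mod_eq_of_lt hi]
  | succ v ih =>
    intro i hi
    have h1 : T^[v+1] '' D i = T '' (T^[v] '' D i) := by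
      rw [Function.iterate_succ', Set.image_comp]
    rw [h1]
    have h2 : T '' (T^[v] '' D i) ⊆ T '' (D ((i+v)%r)) := Set.image_mono (ih i hi)
    have h3 : T '' D ((i+v)%r) ⊆ D (((i+v)%r + 1) % r) := hmap _ (Nat.mod_lt _ hr)
    have h4 : ((i+v)%r + 1) % r = (i + (v+1)) % r := by
      rw [Nat.mod_add_mod, show (i+v)+1 = i + (v+1) from by ring]
    rw [← h4]
    exact h2.trans h3

lemma decomp_approx_lift {X : Type*} [MetricSpace X] [CompactSpace X] (T : X → X)
    (hT : Continuous T) (r : ℕ) (D : ℕ → Set X) (hdec : RegPerDecomp T r D)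
    (happ : ∀ i < r, ApproxProductOn (T^[r]) (D i)) :
    ApproxProductOn T Set.univ := by
  obtain ⟨hr, hreg, hnwd, hmap, hcover⟩ := hdec
  have himg := regPerDecomp_iter_image T hr hmap
  have hcov : ∀ z : X, ∃ c, c < r ∧ z ∈ D c := by
    intro z
    have hz : z ∈ ⋃ i ∈ Finset.range r, D i := by rw [hcover]; trivial
    simp only [Set.mem_iUnion, Finset.mem_range] at hz
    obtain ⟨c, hc1, hc2⟩ := hz
    exact ⟨c, hc1, hc2⟩
  intro ε hε δ₁ hδ₁ δ₂ hδ₂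
  have hrR : (0:ℝ) < r := by exact_mod_cast hr
  obtain ⟨η, hη, hηcont⟩ := iter_horizon T hT hε r
  choose! Nf hNfpos hNf using fun i (hi : i < r) =>
    happ i hi η hη (δ₁/(2*r)) (div_pos hδ₁ (mul_pos two_pos hrR)) (δ₂/2) (by positivity)
  set N'max := (Finset.range r).sup Nf with hNmax
  obtain ⟨N₂, hN₂⟩ := exists_nat_ge ((6*r + 2*r*δ₂)/δ₂)
  obtain ⟨N₃, hN₃⟩ := exists_nat_ge ((2*r + 2*δ₁)/δ₁)
  refine ⟨max (r*N'max) (max N₂ N₃) + 1, by omega, ?_⟩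
  intro n hn x _
  choose c hcr hxc using fun i => hcov (x i)
  set c₀ := c 0 with hc₀
  have hc₀r : c₀ < r := hcr 0
  set vf : ℕ → ℕ := fun i => (c₀ + r - c i) % r with hvf
  have hvlt : ∀ i, vf i < r := fun i => Nat.mod_lt _ hr
  have hv0 : vf 0 = 0 := by
    show (c₀ + r - c 0) % r = 0
    rw [← hc₀, Nat.add_sub_cancel_left, Nat.mod_self]
  have hx'' : ∀ i, T^[vf i] (x i) ∈ D c₀ := by
    intro i
    have h1 : T^[vf i] (x i) ∈ T^[vf i] '' D (c i) := ⟨x i, hxc i, rfl⟩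
    have h2 := himg (vf i) (c i) (hcr i) h1
    have h3 : (c i + vf i) % r = c₀ := by
      show (c i + (c₀ + r - c i) % r) % r = c₀
      have hcir := hcr i
      rw [add_comm (c i) _, Nat.mod_add_mod]
      have e : c₀ + r - c i + c i = c₀ + r := by omega
      rw [e, Nat.add_mod_right, Nat.mod_eq_of_lt hc₀r]
    rwa [h3] at h2
  set m := n / r + 2 with hm
  have hnr := Nat.div_add_mod n r
  have hnrlt : n % r < r := Nat.mod_lt _ hr
  have hrm : r * m = r * (n/r) + 2*r := by rw [hm]; ring
  have hrm_lower : n + r + 1 ≤ r * m := by omega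
  have hrm_upper : r * m ≤ n + 2*r := by omega
  have hmge : Nf c₀ ≤ m := by
    have h1 : Nf c₀ ≤ N'max := Finset.le_sup (Finset.mem_range.mpr hc₀r)
    have h3 : N'max ≤ n / r := (Nat.le_div_iff_mul_le hr).mpr
      (by have e := Nat.mul_comm N'max r; omega)
    omega
  obtain ⟨h', hh'0, hh'g, y, hyD, hytr⟩ := hNf c₀ hc₀r m hmge (fun i => T^[vf i] (x i)) hx''
  have hvle : ∀ i, vf i ≤ r * h' i := by
    intro i
    cases i with
    | zero => rw [hv0]; omega
    | succ k =>
      have h1 : m ≤ h' (k+1) := le_trans (Nat.le_add_left m (h' k)) (hh'g k).1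
      have h2 : r * m ≤ r * h' (k+1) := Nat.mul_le_mul_left r h1
      have h3 := hvlt (k+1)
      omega
  refine ⟨fun i => r * h' i - vf i, ?_, ?_, y, Set.mem_univ y, ?_⟩
  · show r * h' 0 - vf 0 = 0
    rw [hh'0, hv0]
    simp
  · intro i
    have hg1 : h' i + m ≤ h' (i+1) := (hh'g i).1
    have hg2 : (h' (i+1) : ℝ) - h' i ≤ m * (1 + δ₂/2) := (hh'g i).2
    have hga : r * h' i + r * m ≤ r * h' (i+1) := by
      have h1 := Nat.mul_le_mul_left r hg1
      rw [Nat.mul_add] at h1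
      exact h1
    have hv1 := hvlt i
    have hv2 := hvlt (i+1)
    constructor
    · show r * h' i - vf i + n ≤ r * h' (i+1) - vf (i+1)
      omega
    · show ((r * h' (i+1) - vf (i+1) : ℕ) : ℝ) - ((r * h' i - vf i : ℕ) : ℝ) ≤ n * (1+δ₂)
      rw [Nat.cast_sub (hvle (i+1)), Nat.cast_sub (hvle i)]
      push_cast
      have hgr : (r:ℝ) * (h' (i+1) : ℝ) - r * h' i ≤ (r:ℝ) * ((m:ℝ) * (1 + δ₂/2)) := by
        nlinarith [mul_le_mul_of_nonneg_left hg2 (le_of_lt hrR)]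
      have hrmR : (r:ℝ) * m ≤ (n:ℝ) + 2*r := by exact_mod_cast hrm_upper
      have hq2 : ((r:ℝ)*m)*(1+δ₂/2) ≤ ((n:ℝ)+2*r)*(1+δ₂/2) :=
        mul_le_mul_of_nonneg_right hrmR (by positivity)
      have hn2 : (6*r + 2*r*δ₂ : ℝ) ≤ n * δ₂ := by
        have h2 : (N₂:ℝ) ≤ n := by exact_mod_cast (by omega : N₂ ≤ n)
        calc (6*r + 2*r*δ₂ : ℝ) = ((6*r + 2*r*δ₂)/δ₂) * δ₂ :=
              (div_mul_cancel₀ _ (ne_of_gt hδ₂)).symm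
          _ ≤ n * δ₂ := mul_le_mul_of_nonneg_right (hN₂.trans h2) hδ₂.le
      have hvfiR : (0:ℝ) ≤ (vf (i+1) : ℝ) := Nat.cast_nonneg _
      have hvf1R : (vf i : ℝ) ≤ r := by exact_mod_cast (hvlt i).le
      nlinarith [hgr, hq2, hn2]
  · intro i
    show (((Finset.range n).filter
        (fun j => ε < dist (T^[r * h' i - vf i + j] y) (T^[j] (x i)))).card : ℝ) ≤ δ₁ * n
    set Sm := (Finset.range m).filter
      (fun q => η < dist ((T^[r])^[h' i + q] y) ((T^[r])^[q] (T^[vf i] (x i)))) with hSm_def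
    have hSmR : ((Sm.card : ℕ) : ℝ) ≤ δ₁/(2*r) * m := by
      rw [hSm_def]; exact hytr i
    have hsub : (Finset.range n).filter
        (fun j => ε < dist (T^[(r * h' i - vf i) + j] y) (T^[j] (x i))) ⊆
        (Finset.range (vf i)) ∪ Sm.biUnion
          (fun q => (Finset.range r).image (fun s => vf i + (r*q + s))) := by
      intro j hj
      rw [Finset.mem_filter, Finset.mem_range] at hj
      obtain ⟨hjn, hjd⟩ := hj
      rw [Finset.mem_union]
      by_cases hjv : j < vf i
      · exact Or.inl (Finset.mem_range.mpr hjv)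
      push_neg at hjv
      right
      have hs : (j - vf i) % r < r := Nat.mod_lt _ hr
      have hu := Nat.div_add_mod (j - vf i) r
      set q := (j - vf i) / r with hq_def
      set s := (j - vf i) % r with hs_def
      have hvi := hvlt i
      have hvv := hvle i
      have hqm : q < m := by
        have e : m * r = r * m := Nat.mul_comm _ _
        have h1 : j - vf i < m * r := by omega
        rw [hq_def]
        exact (Nat.div_lt_iff_lt_mul hr).mpr h1
      have hqSm : q ∈ Sm := by
        by_contra hqn
        have hok : dist ((T^[r])^[h' i + q] y) ((T^[r])^[q] (T^[vf i] (x i))) ≤ η := by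
          rcases le_or_gt (dist ((T^[r])^[h' i + q] y) ((T^[r])^[q] (T^[vf i] (x i)))) η with h | h
          · exact h
          · exact absurd (Finset.mem_filter.mpr ⟨Finset.mem_range.mpr hqm, h⟩) (hSm_def ▸ hqn)
        have h5 := hηcont _ _ hok s hs.le
        have e1 : T^[s] ((T^[r])^[h' i + q] y) = T^[(r * h' i - vf i) + j] y := by
          rw [← Function.iterate_mul, ← Function.iterate_add_apply]
          congr 1
          have hmul : r * (h' i + q) = r * h' i + r * q := Nat.mul_add _ _ _
          omega
        have e2 : T^[s] ((T^[r])^[q] (T^[vf i] (x i))) = T^[j] (x i) := by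
          rw [← Function.iterate_mul, ← Function.iterate_add_apply,
            ← Function.iterate_add_apply]
          congr 1
          omega
        rw [e1, e2] at h5
        exact absurd hjd (not_lt.mpr h5)
      exact Finset.mem_biUnion.mpr
        ⟨q, hqSm, Finset.mem_image.mpr ⟨s, Finset.mem_range.mpr hs, by omega⟩⟩
    have hcard : ((Finset.range n).filter
        (fun j => ε < dist (T^[(r * h' i - vf i) + j] y) (T^[j] (x i)))).card ≤
        vf i + Sm.card * r := by
      calc ((Finset.range n).filter
          (fun j => ε < dist (T^[(r * h' i - vf i) + j] y) (T^[j] (x i)))).card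
          ≤ ((Finset.range (vf i)) ∪ Sm.biUnion
              (fun q => (Finset.range r).image (fun s => vf i + (r*q + s)))).card :=
            Finset.card_le_card hsub
        _ ≤ (Finset.range (vf i)).card + (Sm.biUnion
              (fun q => (Finset.range r).image (fun s => vf i + (r*q + s)))).card :=
            Finset.card_union_le _ _
        _ ≤ vf i + Sm.card * r := by
            refine add_le_add (le_of_eq (Finset.card_range _)) ?_
            refine le_trans Finset.card_biUnion_le ?_
            refine le_trans (Finset.sum_le_card_nsmul _ _ r ?_) (le_of_eq (by rw [smul_eq_mul]))
            intro q _
            exact le_trans Finset.card_image_le (le_of_eq (Finset.card_range _))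
    have hmR : (m:ℝ) ≤ (n:ℝ)/r + 2 := by
      rw [hm]
      push_cast
      have := Nat.cast_div_le (m := n) (n := r) (α := ℝ)
      linarith
    have hr1 : (1:ℝ) ≤ r := by exact_mod_cast hr
    have hdivr : (n:ℝ)/r ≤ n := div_le_self (Nat.cast_nonneg n) hr1
    have hn3 : (2*r + 2*δ₁ : ℝ) ≤ n * δ₁ := by
      have h2 : (N₃:ℝ) ≤ n := by exact_mod_cast (by omega : N₃ ≤ n)
      calc (2*r + 2*δ₁ : ℝ) = ((2*r + 2*δ₁)/δ₁) * δ₁ :=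
            (div_mul_cancel₀ _ (ne_of_gt hδ₁)).symm
        _ ≤ n * δ₁ := mul_le_mul_of_nonneg_right (hN₃.trans h2) hδ₁.le
    have hfin : (vf i : ℝ) + (Sm.card : ℝ) * r ≤ δ₁ * n := by
      have h1 : (Sm.card : ℝ) * r ≤ (δ₁/(2*r) * m) * r :=
        mul_le_mul_of_nonneg_right hSmR (le_of_lt hrR)
      have h2 : (δ₁/(2*r) * (m:ℝ)) * r = δ₁ * m / 2 := by
        field_simp
      have h5 : (vf i : ℝ) ≤ r := by exact_mod_cast (hvlt i).le
      rw [h2] at h1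
      have h6 : δ₁ * m ≤ δ₁ * ((n:ℝ)/r + 2) := mul_le_mul_of_nonneg_left hmR hδ₁.le
      have h7 : δ₁ * ((n:ℝ)/r + 2) ≤ δ₁ * ((n:ℝ) + 2) :=
        mul_le_mul_of_nonneg_left (by linarith) hδ₁.le
      linarith [h1, h5, h6, h7, hn3]
    have hcast : (((Finset.range n).filter
        (fun j => ε < dist (T^[(r * h' i - vf i) + j] y) (T^[j] (x i)))).card : ℝ) ≤
        (vf i : ℝ) + (Sm.card : ℝ) * r := by exact_mod_cast hcard
    exact hcast.trans hfin

theorem relative_weak_spec_implies_approx_product {X : Type*} [MetricSpace X]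
    [CompactSpace X] (T : X → X) (hT : Continuous T)
    (r : ℕ) (D : ℕ → Set X) (hdec : RegPerDecomp T r D)
    (h : (∀ i < r, WeakSpecOn (T^[r]) (D i)) ∨ (∀ i < r, ApproxProductOn (T^[r]) (D i))) :
    ApproxProductOn T Set.univ := by
  apply decomp_approx_lift T hT r D hdec
  rcases h with hws | happ
  · intro i hi
    have hclosed : IsClosed (D i) := by
      rw [hdec.2.1 i hi]
      exact isClosed_closure
    have hinv : (T^[r]) '' D i ⊆ D i := by
      have h1 := regPerDecomp_iter_image T hdec.1 hdec.2.2.2.1 r i hi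
      rwa [Nat.add_mod_right, Nat.mod_eq_of_lt hi] at h1
    exact weakSpecOn_implies_approxProductOn (T^[r]) (hT.iterate r) (D i)
      hclosed hinv (hws i hi)
  · exact happ
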